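/- Let T be a triangulated category with coproducts, let b ∈ T be an object, and let e : b → b be an idempotent endomorphism (e ∘ e = e) which splits, with image x (i.e. there are maps p : b → x, i : x → b with p ∘ i = id_x and i ∘ p = e). Then x is a homotopy colimit of the sequence b → b → b → ⋯ with all maps equal to e; in particular there is a distinguished triangle ∐_{i=0}^∞ b → x → (∐_{i=0}^∞ b)[1]. -/

import Mathlib

open CategoryTheory CategoryTheory.Limits CategoryTheory.Pretriangulated

universe w v u

namespace Paper

variable (C : Type u) [Category.{v} C] [HasZeroObject C] [Preadditive C] [HasShift C ℤ]
  [∀ n : ℤ, (CategoryTheory.shiftFunctor C n).Additive] [Pretriangulated C]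

/-- `A ⋆ B`: the full subcategory of objects `y` admitting a distinguished triangle
`x ⟶ y ⟶ z ⟶ x⟦1⟧` with `x ∈ A` and `z ∈ B`. -/
def star (A B : Set C) : Set C :=
  {y | ∃ (x z : C) (f : x ⟶ y) (g : y ⟶ z) (h : z ⟶ x⟦(1 : ℤ)⟧),
    x ∈ A ∧ z ∈ B ∧ Triangle.mk f g h ∈ distTriang C}

/-- `Add A`: all objects isomorphic to a (set-indexed) coproduct of objects of `A`. -/
def AddCl (A : Set C) : Set C :=
  {y | ∃ (ι : Type w) (f : ι → C) (c : Cofan f),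
    (∀ i, f i ∈ A) ∧ Nonempty (IsColimit c) ∧ Nonempty (y ≅ c.pt)}

/-- `add A`: all objects isomorphic to a finite coproduct of objects of `A`. -/
def addCl (A : Set C) : Set C :=
  {y | ∃ (ι : Type) (_ : Finite ι) (f : ι → C) (c : Cofan f),
    (∀ i, f i ∈ A) ∧ Nonempty (IsColimit c) ∧ Nonempty (y ≅ c.pt)}

/-- `Coprod_n(A)` for `n ≥ 1` (the value at `0` is a junk value `∅`):
`Coprod_1(A) = Add(A)` and `Coprod_{n+1}(A) = Add(A) ⋆ Coprod_n(A)`. -/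
def CoprodN (A : Set C) : ℕ → Set C
  | 0 => ∅
  | 1 => AddCl.{w} C A
  | (n+2) => star C (AddCl.{w} C A) (CoprodN A (n+1))

/-- `COprod_n(A)` for `n ≥ 1` (the value at `0` is a junk value `∅`):
`COprod_1(A) = add(A)` and `COprod_{n+1}(A) = add(A) ⋆ COprod_n(A)`. -/
def COprodN (A : Set C) : ℕ → Set C
  | 0 => ∅
  | 1 => addCl C A
  | (n+2) => star C (addCl C A) (COprodN A (n+1))

/-- `Smr A`: direct summands of objects of `A`. -/
def Smr (A : Set C) : Set C :=
  {x | ∃ b ∈ A, ∃ (i : x ⟶ b) (r : b ⟶ x), i ≫ r = 𝟙 x}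

/-- The shift `A⟦k⟧` of a collection of objects. -/
def shiftSet (A : Set C) (k : ℤ) : Set C := {y | ∃ a ∈ A, Nonempty (y ≅ a⟦k⟧)}

/-- `A[m,n] = ⋃_{i=-n}^{-m} A⟦i⟧`. -/
def shiftRange (A : Set C) (m n : ℤ) : Set C :=
  {y | ∃ i : ℤ, -n ≤ i ∧ i ≤ -m ∧ y ∈ shiftSet C A i}

/-- `A[m,∞) = ⋃_{i ≤ -m} A⟦i⟧`. -/
def shiftRangeGE (A : Set C) (m : ℤ) : Set C :=
  {y | ∃ i : ℤ, i ≤ -m ∧ y ∈ shiftSet C A i}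

/-- `A(-∞,∞) = ⋃_{i ∈ ℤ} A⟦i⟧`. -/
def shiftAll (A : Set C) : Set C := {y | ∃ i : ℤ, y ∈ shiftSet C A i}

/-- `s` is a compact object: the canonical map `⊕ᵢ Hom(s, f i) → Hom(s, ∐ f)`
is bijective for every set-indexed family `f`. -/
def IsCompactObj [HasCoproducts.{v} C] (s : C) : Prop :=
  ∀ (ι : Type v) [DecidableEq ι] (f : ι → C),
    Function.Bijective (DFinsupp.sumAddHom
      (fun i => AddMonoidHom.mk' (fun g : s ⟶ f i => g ≫ Sigma.ι f i)
        (fun g g' => Preadditive.add_comp _ _ _ g g' _)) :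
      (Π₀ i : ι, (s ⟶ f i)) → (s ⟶ ∐ f))

/-- Let `C` be a triangulated category with coproducts, `e : b ⟶ b` a
split idempotent with image `x` (via `p : b ⟶ x`, `i : x ⟶ b`, `i ≫ p = 𝟙 x`,
`p ≫ i = e`). Then `x` is a homotopy colimit of the sequence `b → b → b → ⋯` with all
maps `e`: there is a distinguished triangle
`∐ b --(1 - shift)--> ∐ b ⟶ x ⟶ (∐ b)⟦1⟧`; in particular there is a distinguished
triangle `∐ b ⟶ x ⟶ (∐ b)⟦1⟧`. -/
theorem stmt6 [HasCoproducts.{0} C] (b x : C) (e : b ⟶ b) (he : e ≫ e = e)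
    (p : b ⟶ x) (i : x ⟶ b) (hip : i ≫ p = 𝟙 x) (hpi : p ≫ i = e) :
    (∃ (g : (∐ fun _ : ℕ => b) ⟶ x) (h : x ⟶ (∐ fun _ : ℕ => b)⟦(1 : ℤ)⟧),
      Triangle.mk
        (Sigma.desc fun k : ℕ =>
          Sigma.ι (fun _ : ℕ => b) k - e ≫ Sigma.ι (fun _ : ℕ => b) (k + 1))
        g h ∈ distTriang C) ∧
    (∃ (α : (∐ fun _ : ℕ => b) ⟶ x) (β : x ⟶ (∐ fun _ : ℕ => b)⟦(1 : ℤ)⟧)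
      (δ : (∐ fun _ : ℕ => b)⟦(1 : ℤ)⟧ ⟶ (∐ fun _ : ℕ => b)⟦(1 : ℤ)⟧),
      Triangle.mk α β δ ∈ distTriang C) := by
  have hie : i ≫ e = i := by rw [← hpi, ← Category.assoc, hip, Category.id_comp]
  have hep : e ≫ p = p := by rw [← hpi, Category.assoc, hip, Category.comp_id]
  have he' : ∀ {Z : C} (f : b ⟶ Z), e ≫ e ≫ f = e ≫ f := fun f => by
    rw [← Category.assoc, he]
  have hie' : ∀ {Z : C} (f : b ⟶ Z), i ≫ e ≫ f = i ≫ f := fun f => by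
    rw [← Category.assoc, hie]
  let B := ∐ fun _ : ℕ => b
  let ι' : ℕ → (b ⟶ B) := fun k => Sigma.ι (fun _ : ℕ => b) k
  let φ : B ⟶ B := Sigma.desc fun k : ℕ => ι' k - e ≫ ι' (k + 1)
  let g : B ⟶ x := Sigma.desc fun _ => p
  let s : x ⟶ B := i ≫ ι' 0
  let r : B ⟶ B := Sigma.desc fun k => ι' k - ∑ j ∈ Finset.range (k + 1), e ≫ ι' j
  have ιdesc : ∀ {Z : C} (q : ∀ _ : ℕ, b ⟶ Z) (k : ℕ),
      Sigma.ι (fun _ : ℕ => b) k ≫ Sigma.desc q = q k := fun q k => Sigma.ι_desc q k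
  have ιdesc' : ∀ {Z W : C} (q : ∀ _ : ℕ, b ⟶ Z) (k : ℕ) (t : Z ⟶ W),
      Sigma.ι (fun _ : ℕ => b) k ≫ Sigma.desc q ≫ t = q k ≫ t := by
    intro Z W q k t
    rw [← Category.assoc, ιdesc]
  have hφg : φ ≫ g = 0 := by
    ext k
    simp only [φ, g, ι', ιdesc', Preadditive.sub_comp,
      Category.assoc, ιdesc, comp_zero, hep, sub_self]
  have hsg : s ≫ g = 𝟙 x := by
    simp only [s, g, ι', Category.assoc, ιdesc, hip]
  have hφr : φ ≫ r = 𝟙 B := by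
    ext k
    simp only [φ, r, ι', ιdesc', Preadditive.sub_comp,
      Category.assoc, ιdesc, Category.comp_id]
    rw [Finset.sum_range_succ (f := fun j => e ≫ Sigma.ι (fun _ : ℕ => b) j) (n := k + 1)]
    simp only [Preadditive.comp_sub, Preadditive.comp_add, Preadditive.comp_sum, he']
    rw [show Sigma.ι (fun _ : ℕ => b) k ≫ 𝟙 B = Sigma.ι (fun _ : ℕ => b) k from Category.comp_id _]
    abel
  have hsr : s ≫ r = 0 := by
    simp only [s, r, ι', Category.assoc, ιdesc,
      Preadditive.comp_sub, zero_add, Finset.range_one, Finset.sum_singleton, hie', sub_self]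
  have hrg : r ≫ φ + g ≫ s = 𝟙 B := by
    ext k
    simp only [r, g, s, φ, ι', Preadditive.comp_add, ιdesc',
      Preadditive.sub_comp, Preadditive.sum_comp, Category.assoc, ιdesc,
      Category.comp_id]
    have tele : ∑ j ∈ Finset.range (k + 1),
        (e ≫ (Sigma.ι (fun _ : ℕ => b) j - e ≫ Sigma.ι (fun _ : ℕ => b) (j + 1)))
        = e ≫ Sigma.ι (fun _ : ℕ => b) 0 - e ≫ Sigma.ι (fun _ : ℕ => b) (k + 1) := by
      simp only [Preadditive.comp_sub, he']
      exact Finset.sum_range_sub' (fun j => e ≫ Sigma.ι (fun _ : ℕ => b) j) (k + 1)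
    rw [tele, ← Category.assoc, hpi]
    rw [show Sigma.ι (fun _ : ℕ => b) k ≫ 𝟙 B = Sigma.ι (fun _ : ℕ => b) k from Category.comp_id _]
    abel
  have : HasBinaryBiproducts C := HasBinaryBiproducts.of_hasBinaryCoproducts
  let m : B ⊞ x ≅ B := by
    refine ⟨biprod.desc φ s, biprod.lift r g, ?_, ?_⟩
    · apply biprod.hom_ext' <;> apply biprod.hom_ext <;>
        simp [hφr, hφg, hsr, hsg]
    · simp [biprod.lift_desc, hrg]
  have hiso : Triangle.mk φ g (0 : x ⟶ B⟦(1:ℤ)⟧) ≅ binaryBiproductTriangle B x := by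
    refine Triangle.isoMk _ _ (Iso.refl _) m.symm (Iso.refl _) ?_ ?_ ?_
    · dsimp [m]
      change φ ≫ biprod.lift r g = 𝟙 B ≫ biprod.inl
      apply biprod.hom_ext <;> simp [hφr, hφg]
    · dsimp [m]; exact (Category.comp_id _).trans (biprod.lift_snd _ _).symm
    · exact (zero_comp).trans (comp_zero).symm
  have hdist : Triangle.mk φ g (0 : x ⟶ B⟦(1:ℤ)⟧) ∈ distTriang C :=
    isomorphic_distinguished _ (binaryBiproductTriangle_distinguished B x) _ hiso
  refine ⟨⟨g, 0, hdist⟩, ⟨g, 0, -(φ⟦(1:ℤ)⟧'), ?_⟩⟩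
  exact rot_of_distTriang _ hdist
end Paper
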